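/- Let A be a unital C*-algebra in which every maximal abelian *-subalgebra is monotone σ-complete. Then for each x ∈ A, the set P = {e ∈ Proj(A) : xe = 0} is upward directed. -/

import Mathlib

/-- `S` is a (not necessarily unital) star-subalgebra, viewed as a set. -/
def IsStarSubalgSet {B : Type*} [NonUnitalNormedRing B] [StarRing B] [Module ℂ B]
    (S : Set B) : Prop :=
  (0 : B) ∈ S ∧ (∀ x ∈ S, ∀ y ∈ S, x + y ∈ S) ∧ (∀ (c : ℂ), ∀ x ∈ S, c • x ∈ S) ∧
    (∀ x ∈ S, ∀ y ∈ S, x * y ∈ S) ∧ (∀ x ∈ S, star x ∈ S)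

/-- `S` is a maximal abelian star-subalgebra. -/
def IsMasa {B : Type*} [NonUnitalNormedRing B] [StarRing B] [Module ℂ B]
    (S : Set B) : Prop :=
  IsStarSubalgSet S ∧ (∀ x ∈ S, ∀ y ∈ S, x * y = y * x) ∧
    ∀ T : Set B, IsStarSubalgSet T → (∀ x ∈ T, ∀ y ∈ T, x * y = y * x) → S ⊆ T → T = S

/-- The set `S` is monotone σ-complete: every norm-bounded monotone increasing sequence of
self-adjoint elements of `S` has a supremum within the self-adjoint part of `S`. -/
def MonotoneSigmaComplete {B : Type*} [NonUnitalNormedRing B] [StarRing B] [Module ℂ B]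
    [PartialOrder B] (S : Set B) : Prop :=
  ∀ a : ℕ → B, (∀ n, a n ∈ S) → (∀ n, star (a n) = a n) → Monotone a →
    (∃ c : ℝ, ∀ n, ‖a n‖ ≤ c) →
    ∃ b ∈ S, star b = b ∧ (∀ n, a n ≤ b) ∧
      ∀ x ∈ S, star x = x → (∀ n, a n ≤ x) → b ≤ x

section Aux

variable {A : Type*} [NormedRing A] [StarRing A] [CStarRing A] [CompleteSpace A]
    [NormedAlgebra ℂ A] [StarModule ℂ A] [PartialOrder A] [StarOrderedRing A]

@[reducible] noncomputable def auxCSA : CStarAlgebra A :=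
  { ‹NormedRing A›, ‹StarRing A›, ‹CStarRing A›, ‹CompleteSpace A›,
    ‹NormedAlgebra ℂ A›, ‹StarModule ℂ A› with }

attribute [local instance] auxCSA

lemma cfc_mem_of_closed (S : Subalgebra ℝ A) (hS : IsClosed (S : Set A)) {b : A}
    (hb : IsSelfAdjoint b) (hbS : b ∈ S) (f : ℝ → ℝ) : cfc f b ∈ S := by
  by_cases hf : ContinuousOn f (spectrum ℝ b)
  · rw [cfc_apply f b hb hf]
    set σ := spectrum ℝ b
    set φ : C(σ, ℝ) →⋆ₐ[ℝ] A := cfcHom hb with hφ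
    have hT : IsClosed (⇑φ ⁻¹' (S : Set A)) := hS.preimage (cfcHom_continuous hb)
    have hX : φ ((Polynomial.toContinuousMapOnAlgHom σ) Polynomial.X) = b := by
      have h1 : (Polynomial.toContinuousMapOnAlgHom σ) Polynomial.X
          = (ContinuousMap.id ℝ).restrict σ := by
        ext x
        simp [Polynomial.toContinuousMapOnAlgHom, Polynomial.toContinuousMapOn,
          Polynomial.toContinuousMap]
      rw [h1]
      exact cfcHom_id hb
    have hpoly : (polynomialFunctions σ : Set C(σ, ℝ)) ⊆ ⇑φ ⁻¹' (S : Set A) := by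
      intro g hg
      rw [polynomialFunctions_coe] at hg
      obtain ⟨p, rfl⟩ := hg
      have e2 : φ ((Polynomial.toContinuousMapOnAlgHom σ) p) = Polynomial.aeval b p := by
        conv_lhs => rw [← Polynomial.aeval_X_left_apply p]
        rw [← Polynomial.aeval_algHom_apply, ← Polynomial.aeval_algHom_apply, hX]
      have e3 : Polynomial.aeval b p ∈ Algebra.adjoin ℝ ({b} : Set A) := by
        rw [Algebra.adjoin_singleton_eq_range_aeval]
        exact ⟨p, rfl⟩
      have e4 : Algebra.adjoin ℝ ({b} : Set A) ≤ S :=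
        Algebra.adjoin_le (Set.singleton_subset_iff.mpr hbS)
      simp only [Set.mem_preimage, e2, SetLike.mem_coe]
      exact e4 e3
    have h1 : closure (polynomialFunctions σ : Set C(σ, ℝ)) ⊆ ⇑φ ⁻¹' (S : Set A) :=
      closure_minimal hpoly hT
    have h2 : closure (polynomialFunctions σ : Set C(σ, ℝ)) = Set.univ := by
      have h3 := polynomialFunctions.topologicalClosure σ
      calc closure (polynomialFunctions σ : Set C(σ, ℝ))
          = ((polynomialFunctions σ).topologicalClosure : Set C(σ, ℝ)) :=
            (Subalgebra.topologicalClosure_coe _).symm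
        _ = ((⊤ : Subalgebra ℝ C(σ, ℝ)) : Set C(σ, ℝ)) := by rw [h3]
        _ = Set.univ := by simp
    exact h1 (h2 ▸ Set.mem_univ _)
  · rw [cfc_apply_of_not_continuousOn b hf]
    exact zero_mem S

lemma cfc_comm_of_comm {b c : A} (hb : IsSelfAdjoint b) (h : b * c = c * b) (f : ℝ → ℝ) :
    cfc f b * c = c * cfc f b := by
  set S : Subalgebra ℝ A := Subalgebra.centralizer ℝ {c} with hS
  have hmem : ∀ u : A, u ∈ S ↔ c * u = u * c := by
    intro u
    rw [hS, Subalgebra.mem_centralizer_iff]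
    simp
  have hclosed : IsClosed (S : Set A) := by
    have : (S : Set A) = {u : A | c * u = u * c} := by
      ext u; simpa using hmem u
    rw [this]
    exact isClosed_eq (continuous_const.mul continuous_id) (continuous_id.mul continuous_const)
  have hbS : b ∈ S := (hmem b).mpr h.symm
  have := (hmem _).mp (cfc_mem_of_closed S hclosed hb hbS f)
  exact this.symm

lemma mul_nonneg_of_comm {a b : A} (ha : 0 ≤ a) (hb : 0 ≤ b) (h : a * b = b * a) :
    0 ≤ a * b := by
  have has : IsSelfAdjoint a := .of_nonneg ha
  set s := cfc Real.sqrt a with hs_def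
  have hs0 : 0 ≤ s := cfc_nonneg fun x _ => Real.sqrt_nonneg x
  have hss : s * s = a := by
    rw [hs_def, ← cfc_mul _ _ a (Real.continuous_sqrt.continuousOn)
      (Real.continuous_sqrt.continuousOn)]
    have e : cfc (fun t => Real.sqrt t * Real.sqrt t) a = cfc (id : ℝ → ℝ) a :=
      cfc_congr fun t ht => Real.mul_self_sqrt (spectrum_nonneg_of_nonneg ha ht)
    rw [e, cfc_id ℝ a]
  have hcs : s * b = b * s := cfc_comm_of_comm has h _
  have hstar : star s = s := (IsSelfAdjoint.of_nonneg hs0).star_eq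
  calc (0:A) ≤ star s * b * s := star_left_conjugate_nonneg hb s
    _ = s * (b * s) := by rw [hstar, mul_assoc]
    _ = s * (s * b) := by rw [hcs]
    _ = a * b := by rw [← mul_assoc, hss]

/-- the function `t ↦ min ((n+1) t) 1`. -/
def gfun (n : ℕ) (t : ℝ) : ℝ := min (((n : ℝ) + 1) * t) 1

noncomputable def hfun (n : ℕ) (t : ℝ) : ℝ :=
  min ((n : ℝ) + 1) (max t (((n : ℝ) + 1)⁻¹))⁻¹

lemma gfun_cont (n : ℕ) : Continuous (gfun n) :=
  (continuous_const.mul continuous_id).min continuous_const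

lemma hfun_cont (n : ℕ) : Continuous (hfun n) := by
  have hpos : ∀ t : ℝ, 0 < max t (((n : ℝ) + 1)⁻¹) := fun t =>
    lt_max_of_lt_right (by positivity)
  exact continuous_const.min <|
    ((continuous_id.max continuous_const).inv₀ fun t => (hpos t).ne')

lemma gfun_nonneg (n : ℕ) {t : ℝ} (ht : 0 ≤ t) : 0 ≤ gfun n t :=
  le_min (by positivity) zero_le_one

lemma gfun_le_one (n : ℕ) (t : ℝ) : gfun n t ≤ 1 := min_le_right _ _

lemma gfun_mono {n m : ℕ} (hnm : n ≤ m) (t : ℝ) (ht : 0 ≤ t) :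
    gfun n t ≤ gfun m t := by
  unfold gfun
  have hmn : ((n : ℝ) + 1) * t ≤ ((m : ℝ) + 1) * t := by
    apply mul_le_mul_of_nonneg_right _ ht
    have : (n : ℝ) ≤ (m : ℝ) := Nat.cast_le.mpr hnm
    linarith
  exact min_le_min hmn le_rfl

lemma gfun_prod_le (n m : ℕ) (t : ℝ) (ht : 0 ≤ t) :
    gfun n t * (1 - gfun m t) ≤ ((n : ℝ) + 1) / ((m : ℝ) + 1) := by
  have hM : (0:ℝ) < (m : ℝ) + 1 := by positivity
  rcases le_or_gt 1 (((m : ℝ) + 1) * t) with hc | hc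
  · simp only [gfun]
    rw [min_eq_right hc]
    simp only [sub_self, mul_zero]
    positivity
  · have ht' : t ≤ ((m : ℝ) + 1)⁻¹ := by
      rw [← one_div]
      exact le_of_lt <| (lt_div_iff₀ hM).mpr (by rw [mul_comm]; exact hc)
    have h1 : 1 - gfun m t ≤ 1 := by
      have := gfun_nonneg m ht
      linarith
    calc gfun n t * (1 - gfun m t) ≤ gfun n t * 1 :=
          mul_le_mul_of_nonneg_left h1 (gfun_nonneg n ht)
      _ = gfun n t := mul_one _
      _ ≤ ((n : ℝ) + 1) * t := min_le_left _ _
      _ ≤ ((n : ℝ) + 1) * ((m : ℝ) + 1)⁻¹ :=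
          mul_le_mul_of_nonneg_left ht' (by positivity)
      _ = ((n : ℝ) + 1) / ((m : ℝ) + 1) := by rw [div_eq_mul_inv]

lemma gfun_id_le (n : ℕ) (t : ℝ) (ht : 0 ≤ t) :
    t * (1 - gfun n t) ≤ (((n : ℝ) + 1))⁻¹ := by
  have hN : (0:ℝ) < (n : ℝ) + 1 := by positivity
  rcases le_or_gt 1 (((n : ℝ) + 1) * t) with hc | hc
  · simp only [gfun]
    rw [min_eq_right hc]
    simp only [sub_self, mul_zero]
    positivity
  · have ht' : t ≤ ((n : ℝ) + 1)⁻¹ := by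
      rw [← one_div]
      exact le_of_lt <| (lt_div_iff₀ hN).mpr (by rw [mul_comm]; exact hc)
    have h1 : 1 - gfun n t ≤ 1 := by
      have := gfun_nonneg n ht
      linarith
    calc t * (1 - gfun n t) ≤ t * 1 := mul_le_mul_of_nonneg_left h1 ht
      _ = t := mul_one _
      _ ≤ _ := ht'

lemma gfun_factor (n : ℕ) (t : ℝ) (ht : 0 ≤ t) : gfun n t = t * hfun n t := by
  have hN : (0:ℝ) < (n : ℝ) + 1 := by positivity
  have hc : (0:ℝ) < ((n : ℝ) + 1)⁻¹ := by positivity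
  rcases le_or_gt t (((n : ℝ) + 1)⁻¹) with h | h
  · have h1 : max t (((n : ℝ) + 1)⁻¹) = ((n : ℝ) + 1)⁻¹ := max_eq_right h
    have h2 : hfun n t = (n : ℝ) + 1 := by
      rw [hfun, h1, inv_inv, min_self]
    have h3 : ((n : ℝ) + 1) * t ≤ 1 := by
      calc ((n : ℝ) + 1) * t ≤ ((n : ℝ) + 1) * ((n : ℝ) + 1)⁻¹ :=
            mul_le_mul_of_nonneg_left h (by positivity)
        _ = 1 := mul_inv_cancel₀ hN.ne'
    rw [gfun, min_eq_left h3, h2, mul_comm]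
  · have ht0 : (0:ℝ) < t := hc.trans h
    have h1 : max t (((n : ℝ) + 1)⁻¹) = t := max_eq_left h.le
    have h2 : hfun n t = t⁻¹ := by
      rw [hfun, h1, min_eq_right]
      rw [inv_le_comm₀ ht0 hN]
      exact h.le
    have h3 : 1 ≤ ((n : ℝ) + 1) * t := by
      calc (1:ℝ) = ((n : ℝ) + 1) * ((n : ℝ) + 1)⁻¹ := (mul_inv_cancel₀ hN.ne').symm
      _ ≤ ((n : ℝ) + 1) * t := mul_le_mul_of_nonneg_left h.le (by positivity)
    rw [gfun, min_eq_right h3, h2, mul_inv_cancel₀ ht0.ne']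

lemma closure_isStarSubalgSet {S : Set A} (h : IsStarSubalgSet S) :
    IsStarSubalgSet (closure S) := by
  obtain ⟨h0, hadd, hsmul, hmul, hstar⟩ := h
  refine ⟨subset_closure h0, ?_, ?_, ?_, ?_⟩
  · exact fun a ha b hb =>
      map_mem_closure₂ continuous_add ha hb fun x hx y hy => hadd x hx y hy
  · exact fun c a ha =>
      map_mem_closure (continuous_const_smul c) ha fun x hx => hsmul c x hx
  · exact fun a ha b hb =>
      map_mem_closure₂ continuous_mul ha hb fun x hx y hy => hmul x hx y hy
  · exact fun a ha => map_mem_closure continuous_star ha fun x hx => hstar x hx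

lemma closure_comm {S : Set A} (hcomm : ∀ u ∈ S, ∀ v ∈ S, u * v = v * u) :
    ∀ u ∈ closure S, ∀ v ∈ closure S, u * v = v * u := by
  have step1 : ∀ v ∈ S, ∀ u ∈ closure S, u * v = v * u := by
    intro v hv
    have hcl : closure S ⊆ {u : A | u * v = v * u} :=
      closure_minimal (fun u hu => hcomm u hu v hv)
        (isClosed_eq (continuous_mul_right v) (continuous_mul_left v))
    exact fun u hu => hcl hu
  intro u hu v hv
  have hcl : closure S ⊆ {w : A | u * w = w * u} :=
    closure_minimal (fun w hw => step1 w hw u hu)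
      (isClosed_eq (continuous_mul_left u) (continuous_mul_right u))
  exact hcl hv

lemma adjoin_set_comm {y z : A} (hys : star y = y) (hzs : star z = z) (hc : y * z = z * y) :
    ∀ a ∈ NonUnitalStarAlgebra.adjoin ℂ ({y, z} : Set A),
      ∀ b ∈ NonUnitalStarAlgebra.adjoin ℂ ({y, z} : Set A), a * b = b * a := by
  have lemma1 : ∀ a ∈ NonUnitalStarAlgebra.adjoin ℂ ({y, z} : Set A),
      a * y = y * a ∧ a * z = z * a := by
    intro a ha
    induction ha using NonUnitalStarAlgebra.adjoin_induction with
    | mem x hx =>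
      rcases hx with hx | hx
      · subst hx; exact ⟨rfl, hc⟩
      · rw [Set.mem_singleton_iff] at hx; subst hx; exact ⟨hc.symm, rfl⟩
    | add u v hu hv h1 h2 =>
      exact ⟨by rw [add_mul, mul_add, h1.1, h2.1], by rw [add_mul, mul_add, h1.2, h2.2]⟩
    | zero => simp
    | mul u v hu hv h1 h2 =>
      constructor
      · rw [mul_assoc, h2.1, ← mul_assoc, h1.1, mul_assoc]
      · rw [mul_assoc, h2.2, ← mul_assoc, h1.2, mul_assoc]
    | smul c u hu h1 =>
      exact ⟨by rw [smul_mul_assoc, mul_smul_comm, h1.1],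
        by rw [smul_mul_assoc, mul_smul_comm, h1.2]⟩
    | star u hu h1 =>
      constructor
      · have h2 := congrArg star h1.1
        rw [star_mul, star_mul, hys] at h2
        exact h2.symm
      · have h2 := congrArg star h1.2
        rw [star_mul, star_mul, hzs] at h2
        exact h2.symm
  intro a ha
  induction ha using NonUnitalStarAlgebra.adjoin_induction with
  | mem x hx =>
    intro b hb
    rcases hx with hx | hx
    · subst hx; exact (lemma1 b hb).1.symm
    · rw [Set.mem_singleton_iff] at hx; subst hx; exact (lemma1 b hb).2.symm
  | add u v hu hv h1 h2 =>
    intro b hb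
    rw [add_mul, mul_add, h1 b hb, h2 b hb]
  | zero => simp
  | mul u v hu hv h1 h2 =>
    intro b hb
    rw [mul_assoc, h2 b hb, ← mul_assoc, h1 b hb, mul_assoc]
  | smul c u hu h1 =>
    intro b hb
    rw [smul_mul_assoc, mul_smul_comm, h1 b hb]
  | star u hu h1 =>
    intro b hb
    have h2 := congrArg star (h1 (star b) (star_mem hb))
    rw [star_mul, star_mul, star_star] at h2
    exact h2.symm

lemma exists_masa {y z : A} (hys : star y = y) (hzs : star z = z) (hyz : y * z = 0)
    (hzy : z * y = 0) :
    ∃ M : Set A, IsMasa M ∧ y ∈ M ∧ z ∈ M ∧ (1 : A) ∈ M ∧ IsClosed M := by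
  classical
  set F : Set (Set A) := {S : Set A | IsStarSubalgSet S ∧
    (∀ u ∈ S, ∀ v ∈ S, u * v = v * u) ∧ y ∈ S ∧ z ∈ S} with hF
  -- the seed
  have hS₀ : (NonUnitalStarAlgebra.adjoin ℂ ({y, z} : Set A) : Set A) ∈ F := by
    refine ⟨⟨zero_mem _, fun a ha b hb => add_mem ha hb,
      fun c a ha => SMulMemClass.smul_mem c ha, fun a ha b hb => mul_mem ha hb,
      fun a ha => star_mem ha⟩, ?_, ?_, ?_⟩
    · exact adjoin_set_comm hys hzs (by rw [hyz, hzy])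
    · exact NonUnitalStarAlgebra.subset_adjoin ℂ _ (Set.mem_insert _ _)
    · exact NonUnitalStarAlgebra.subset_adjoin ℂ _ (Set.mem_insert_of_mem _ rfl)
  -- chains have upper bounds
  have hub : ∀ c ⊆ F, IsChain (· ⊆ ·) c → c.Nonempty →
      ∃ ub ∈ F, ∀ s ∈ c, s ⊆ ub := by
    intro c hcF hchain ⟨S₁, hS₁⟩
    refine ⟨⋃₀ c, ⟨⟨?_, ?_, ?_, ?_, ?_⟩, ?_, ?_, ?_⟩, fun s hs => Set.subset_sUnion_of_mem hs⟩
    · exact ⟨S₁, hS₁, (hcF hS₁).1.1⟩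
    · rintro a ⟨Sa, hSa, ha⟩ b ⟨Sb, hSb, hb⟩
      rcases hchain.total hSa hSb with hab | hab
      · exact ⟨Sb, hSb, (hcF hSb).1.2.1 a (hab ha) b hb⟩
      · exact ⟨Sa, hSa, (hcF hSa).1.2.1 a ha b (hab hb)⟩
    · rintro c' a ⟨Sa, hSa, ha⟩
      exact ⟨Sa, hSa, (hcF hSa).1.2.2.1 c' a ha⟩
    · rintro a ⟨Sa, hSa, ha⟩ b ⟨Sb, hSb, hb⟩
      rcases hchain.total hSa hSb with hab | hab
      · exact ⟨Sb, hSb, (hcF hSb).1.2.2.2.1 a (hab ha) b hb⟩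
      · exact ⟨Sa, hSa, (hcF hSa).1.2.2.2.1 a ha b (hab hb)⟩
    · rintro a ⟨Sa, hSa, ha⟩
      exact ⟨Sa, hSa, (hcF hSa).1.2.2.2.2 a ha⟩
    · rintro a ⟨Sa, hSa, ha⟩ b ⟨Sb, hSb, hb⟩
      rcases hchain.total hSa hSb with hab | hab
      · exact (hcF hSb).2.1 a (hab ha) b hb
      · exact (hcF hSa).2.1 a ha b (hab hb)
    · exact ⟨S₁, hS₁, (hcF hS₁).2.2.1⟩
    · exact ⟨S₁, hS₁, (hcF hS₁).2.2.2⟩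
  obtain ⟨M, hseed, hmax⟩ := zorn_subset_nonempty F hub _ hS₀
  obtain ⟨hMsub, hMcomm, hyM, hzM⟩ := hmax.prop
  -- maximality property
  have hmaximal : ∀ T : Set A, IsStarSubalgSet T →
      (∀ u ∈ T, ∀ v ∈ T, u * v = v * u) → M ⊆ T → T = M := by
    intro T hTsub hTcomm hMT
    have hTF : T ∈ F := ⟨hTsub, hTcomm, hMT hyM, hMT hzM⟩
    exact subset_antisymm (hmax.2 hTF hMT) hMT
  have hmasa : IsMasa M := ⟨hMsub, hMcomm, hmaximal⟩
  -- `1 ∈ M`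
  have h1M : (1 : A) ∈ M := by
    set T : Set A := {a : A | ∃ m ∈ M, ∃ c : ℂ, a = m + c • 1} with hT
    have hMT : M ⊆ T := fun m hm => ⟨m, hm, 0, by simp⟩
    have hTsub : IsStarSubalgSet T := by
      refine ⟨hMT hMsub.1, ?_, ?_, ?_, ?_⟩
      · rintro a ⟨m, hm, c, rfl⟩ b ⟨m', hm', c', rfl⟩
        exact ⟨m + m', hMsub.2.1 m hm m' hm', c + c', by rw [add_smul]; abel⟩
      · rintro d a ⟨m, hm, c, rfl⟩
        exact ⟨d • m, hMsub.2.2.1 d m hm, d * c, by rw [smul_add, smul_smul]⟩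
      · rintro a ⟨m, hm, c, rfl⟩ b ⟨m', hm', c', rfl⟩
        refine ⟨m * m' + c • m' + c' • m, ?_, c * c', ?_⟩
        · exact hMsub.2.1 _ (hMsub.2.1 _ (hMsub.2.2.2.1 m hm m' hm') _
            (hMsub.2.2.1 c m' hm')) _ (hMsub.2.2.1 c' m hm)
        · simp only [mul_add, add_mul, smul_mul_assoc, mul_smul_comm, mul_one, one_mul,
            smul_add, smul_smul]
          rw [mul_comm c' c]
          abel
      · rintro a ⟨m, hm, c, rfl⟩
        exact ⟨star m, hMsub.2.2.2.2 m hm, starRingEnd ℂ c, by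
          rw [star_add, star_smul, star_one]; rfl⟩
    have hTcomm : ∀ u ∈ T, ∀ v ∈ T, u * v = v * u := by
      rintro a ⟨m, hm, c, rfl⟩ b ⟨m', hm', c', rfl⟩
      simp only [mul_add, add_mul, smul_mul_assoc, mul_smul_comm, mul_one, one_mul,
        smul_add, smul_smul]
      rw [hMcomm m hm m' hm', mul_comm c c']
      abel
    have hTM : T = M := hmaximal T hTsub hTcomm hMT
    have : (1 : A) ∈ T := ⟨0, hMsub.1, 1, by simp⟩
    rwa [hTM] at this
  -- `M` is closed
  have hMclosed : IsClosed M := by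
    have h1 : closure M = M :=
      hmaximal (closure M) (closure_isStarSubalgSet hMsub) (closure_comm hMcomm)
        subset_closure
    exact isClosed_of_closure_subset h1.le
  exact ⟨M, hmasa, hyM, hzM, h1M, hMclosed⟩

end Aux

/-- If every m.a.s.a. of a unital C*-algebra `A` is monotone σ-complete, then for each
`x ∈ A` the set of projections `e` with `x * e = 0` is upward directed. -/
theorem annihilating_projections_directed {A : Type*} [NormedRing A] [StarRing A]
    [CStarRing A] [CompleteSpace A] [NormedAlgebra ℂ A] [StarModule ℂ A]
    [PartialOrder A] [StarOrderedRing A]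
    (hmasa : ∀ M : Set A, IsMasa M → MonotoneSigmaComplete M) (x : A) :
    ∀ p, (star p = p ∧ p * p = p ∧ x * p = 0) →
      ∀ q, (star q = q ∧ q * q = q ∧ x * q = 0) →
        ∃ e, (star e = e ∧ e * e = e ∧ x * e = 0) ∧ p ≤ e ∧ q ≤ e := by
  letI : CStarAlgebra A := auxCSA
  rintro p ⟨hps, hpp, hxp⟩ q ⟨hqs, hqp, hxq⟩
  have hp0 : (0 : A) ≤ p := by simpa [hps, hpp] using star_mul_self_nonneg p
  have hq0 : (0 : A) ≤ q := by simpa [hqs, hqp] using star_mul_self_nonneg q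
  set y : A := p + q with hy
  have hy0 : 0 ≤ y := add_nonneg hp0 hq0
  have hys : star y = y := by rw [hy, star_add, hps, hqs]
  have hysa : IsSelfAdjoint y := hys
  set z : A := star x * x with hz
  have hz0 : (0 : A) ≤ z := star_mul_self_nonneg x
  have hzs : star z = z := by rw [hz, star_mul, star_star]
  have hzp : z * p = 0 := by rw [hz, mul_assoc, hxp, mul_zero]
  have hzq : z * q = 0 := by rw [hz, mul_assoc, hxq, mul_zero]
  have hzy : z * y = 0 := by rw [hy, mul_add, hzp, hzq, add_zero]
  have hyz : y * z = 0 := by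
    have h := congrArg star hzy
    rwa [star_mul, hys, hzs, star_zero] at h
  obtain ⟨M, hM, hyM, hzM, h1M, hMcl⟩ := exists_masa hys hzs hyz hzy
  obtain ⟨⟨hM0, hMadd, hMsmul, hMmul, hMstar⟩, hMcomm, -⟩ := id hM
  have hsubM : ∀ u v : A, u ∈ M → v ∈ M → u - v ∈ M := by
    intro u v hu hv
    have h := hMadd u hu _ (hMsmul (-1) v hv)
    simpa [neg_smul, sub_eq_add_neg] using h
  -- view `M` as a real subalgebra
  set S : Subalgebra ℝ A :=
    { carrier := M
      one_mem' := h1M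
      zero_mem' := hM0
      mul_mem' := fun {u v} hu hv => hMmul u hu v hv
      add_mem' := fun {u v} hu hv => hMadd u hu v hv
      algebraMap_mem' := fun r => by
        have he : algebraMap ℝ A r = ((r : ℂ)) • (1 : A) := by
          rw [Algebra.algebraMap_eq_smul_one, Complex.coe_smul]
        show algebraMap ℝ A r ∈ M
        rw [he]
        exact hMsmul _ _ h1M } with hS
  have hmemM : ∀ f : ℝ → ℝ, cfc f y ∈ M := fun f =>
    cfc_mem_of_closed S hMcl hysa hyM f
  have hspec : ∀ t ∈ spectrum ℝ y, (0 : ℝ) ≤ t := fun t ht =>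
    spectrum_nonneg_of_nonneg hy0 ht
  -- the approximating sequence
  set a : ℕ → A := fun n => cfc (gfun n) y with ha
  have haM : ∀ n, a n ∈ M := fun n => hmemM _
  have hastar : ∀ n, star (a n) = a n := fun n =>
    (cfc_predicate (gfun n) y : IsSelfAdjoint _).star_eq
  have ha0 : ∀ n, 0 ≤ a n := fun n =>
    cfc_nonneg fun t ht => gfun_nonneg n (hspec t ht)
  have hale : ∀ n, a n ≤ 1 := fun n => cfc_le_one _ _ fun t _ => gfun_le_one n t
  have hmono : Monotone a := by
    intro n m hnm
    exact cfc_mono (fun t ht => gfun_mono hnm t (hspec t ht))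
      ((gfun_cont n).continuousOn) ((gfun_cont m).continuousOn)
  have hbound : ∃ c : ℝ, ∀ n, ‖a n‖ ≤ c :=
    ⟨1, fun n => (CStarAlgebra.norm_le_one_iff_of_nonneg _ (ha0 n)).mpr (hale n)⟩
  obtain ⟨b, hbM, hbs, hble, hbleast⟩ := hmasa M hM a haM hastar hmono hbound
  have hb1 : b ≤ 1 := hbleast 1 h1M (star_one A) fun n => hale n
  have hb0 : (0 : A) ≤ b := le_trans (ha0 0) (hble 0)
  have hprod : ∀ u v : A, u ∈ M → v ∈ M → 0 ≤ u → 0 ≤ v → 0 ≤ u * v :=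
    fun u v hu hv h0u h0v => mul_nonneg_of_comm h0u h0v (hMcomm u hu v hv)
  have h1bM : (1 : A) - b ∈ M := hsubM 1 b h1M hbM
  have h1b0 : (0 : A) ≤ 1 - b := sub_nonneg.mpr hb1
  have halgmono : ∀ r s : ℝ, r ≤ s → algebraMap ℝ A r ≤ algebraMap ℝ A s := by
    intro r s hrs
    calc algebraMap ℝ A r = cfc (fun _ : ℝ => r) y := (cfc_const r y hysa).symm
      _ ≤ cfc (fun _ : ℝ => s) y :=
          cfc_mono (fun t _ => hrs) continuousOn_const continuousOn_const
      _ = algebraMap ℝ A s := cfc_const s y hysa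
  -- main annihilation principle
  have hkey : ∀ u : A, u ∈ M → 0 ≤ u →
      (∀ ε : ℝ, 0 < ε → ∃ m, u * (1 - a m) ≤ algebraMap ℝ A ε) → u * (1 - b) = 0 := by
    intro u huM hu0 hcov
    have hnn : 0 ≤ u * (1 - b) := hprod u _ huM h1bM hu0 h1b0
    have hnorm : ∀ ε : ℝ, 0 < ε → ‖u * (1 - b)‖ ≤ ε := by
      intro ε hε
      obtain ⟨m, hm⟩ := hcov ε hε
      have hle : u * (1 - b) ≤ algebraMap ℝ A ε := by
        refine le_trans ?_ hm
        have h2 : 0 ≤ u * (b - a m) :=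
          hprod u _ huM (hsubM b (a m) hbM (haM m)) hu0 (sub_nonneg.mpr (hble m))
        have h3 : u * (1 - a m) - u * (1 - b) = u * (b - a m) := by
          rw [← mul_sub]
          congr 1
          abel
        rw [← h3] at h2
        exact sub_nonneg.mp h2
      exact (CStarAlgebra.norm_le_iff_le_algebraMap _ hε.le hnn).mpr hle
    have : ‖u * (1 - b)‖ ≤ 0 := by
      by_contra hc
      push_neg at hc
      have := hnorm (‖u * (1 - b)‖ / 2) (by linarith)
      linarith
    rwa [norm_le_zero_iff] at this
  -- `a n * b = a n`
  have key_an : ∀ n, a n * (1 - b) = 0 := by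
    intro n
    refine hkey _ (haM n) (ha0 n) ?_
    intro ε hε
    obtain ⟨m, hm⟩ := exists_nat_gt (((n : ℝ) + 1) / ε)
    refine ⟨m, ?_⟩
    have hC : ((n : ℝ) + 1) / ((m : ℝ) + 1) ≤ ε := by
      rw [div_lt_iff₀ hε] at hm
      rw [div_le_iff₀ (by positivity)]
      nlinarith
    have e1 : cfc (fun t => (1 : ℝ) - gfun m t) y = 1 - a m := by
      rw [cfc_sub (fun _ : ℝ => (1 : ℝ)) (gfun m) y continuousOn_const
        ((gfun_cont m).continuousOn), cfc_const_one ℝ y]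
    have e2 : a n * (1 - a m) = cfc (fun t => gfun n t * (1 - gfun m t)) y := by
      rw [cfc_mul (gfun n) (fun t => (1 : ℝ) - gfun m t) y ((gfun_cont n).continuousOn)
        (Continuous.continuousOn (continuous_const.sub (gfun_cont m))), e1]
    calc a n * (1 - a m) = cfc (fun t => gfun n t * (1 - gfun m t)) y := e2
      _ ≤ algebraMap ℝ A (((n : ℝ) + 1) / ((m : ℝ) + 1)) := by
          have := cfc_mono (fun t ht => gfun_prod_le n m t (hspec t ht))
            (Continuous.continuousOn ((gfun_cont n).mul (continuous_const.sub (gfun_cont m))))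
            continuousOn_const
          rwa [cfc_const _ y hysa] at this
      _ ≤ algebraMap ℝ A ε := halgmono _ _ hC
  -- `y * b = y`
  have key_y : y * (1 - b) = 0 := by
    refine hkey _ hyM hy0 ?_
    intro ε hε
    obtain ⟨n, hn⟩ := exists_nat_gt (1 / ε)
    refine ⟨n, ?_⟩
    have hC : ((n : ℝ) + 1)⁻¹ ≤ ε := by
      rw [inv_le_comm₀ (by positivity) hε, ← one_div]
      linarith
    have e1 : cfc (fun t => (1 : ℝ) - gfun n t) y = 1 - a n := by
      rw [cfc_sub (fun _ : ℝ => (1 : ℝ)) (gfun n) y continuousOn_const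
        ((gfun_cont n).continuousOn), cfc_const_one ℝ y]
    have e2 : y * (1 - a n) = cfc (fun t => t * (1 - gfun n t)) y := by
      rw [cfc_mul (fun t : ℝ => t) (fun t => (1 : ℝ) - gfun n t) y
        (continuousOn_id) (Continuous.continuousOn (continuous_const.sub (gfun_cont n))),
        e1, cfc_id' ℝ y]
    calc y * (1 - a n) = cfc (fun t => t * (1 - gfun n t)) y := e2
      _ ≤ algebraMap ℝ A (((n : ℝ) + 1)⁻¹) := by
          have := cfc_mono (fun t ht => gfun_id_le n t (hspec t ht))
            (Continuous.continuousOn (continuous_id.mul (continuous_const.sub (gfun_cont n))))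
            continuousOn_const
          rwa [cfc_const _ y hysa] at this
      _ ≤ algebraMap ℝ A ε := halgmono _ _ hC
  have hab : ∀ n, a n * b = a n := by
    intro n
    have h := key_an n
    rw [mul_sub, mul_one, sub_eq_zero] at h
    exact h.symm
  have hyb : y * b = y := by
    have h := key_y
    rw [mul_sub, mul_one, sub_eq_zero] at h
    exact h.symm
  have hby : b * y = y := by
    have h := congrArg star hyb
    rwa [star_mul, hbs, hys] at h
  -- `b` is a projection
  have hbb : b * b = b := by
    have h1 : b * b ≤ b := by
      have h0 : 0 ≤ b * (1 - b) := hprod b _ hbM h1bM hb0 h1b0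
      rw [mul_sub, mul_one] at h0
      exact sub_nonneg.mp h0
    have h2 : b ≤ b * b := by
      refine hbleast (b * b) (hMmul b hbM b hbM) (by rw [star_mul, hbs]) ?_
      intro n
      calc a n = a n * b := (hab n).symm
        _ ≤ b * b := by
            have h3 : 0 ≤ (b - a n) * b :=
              hprod _ b (hsubM b (a n) hbM (haM n)) hbM (sub_nonneg.mpr (hble n)) hb0
            rw [sub_mul] at h3
            exact sub_nonneg.mp h3
    exact le_antisymm h1 h2
  -- `x * b = 0`
  have hκ0 : (0 : ℝ) < (‖z‖ + 1)⁻¹ := by positivity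
  set κ : ℝ := (‖z‖ + 1)⁻¹ with hκ
  set z' : A := (κ : ℂ) • z with hz'
  have hz'M : z' ∈ M := hMsmul _ _ hzM
  have hz'eq : star ((Real.sqrt κ : ℂ) • x) * ((Real.sqrt κ : ℂ) • x) = z' := by
    rw [star_smul, smul_mul_smul_comm, hz', hz]
    congr 1
    rw [Complex.star_def, Complex.conj_ofReal, ← Complex.ofReal_mul,
      Real.mul_self_sqrt hκ0.le]
  have hz'0 : (0 : A) ≤ z' := hz'eq ▸ star_mul_self_nonneg _
  have hz's : star z' = z' := by
    rw [hz', star_smul, hzs, Complex.star_def, Complex.conj_ofReal]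
  have hz'le1 : z' ≤ 1 := by
    refine (CStarAlgebra.norm_le_one_iff_of_nonneg _ hz'0).mp ?_
    rw [hz', norm_smul]
    have h1 : ‖(κ : ℂ)‖ = κ := by
      rw [Complex.norm_real, Real.norm_eq_abs, abs_of_pos hκ0]
    rw [h1, hκ]
    have h2 : ‖z‖ ≤ ‖z‖ + 1 := by linarith
    calc (‖z‖ + 1)⁻¹ * ‖z‖ ≤ (‖z‖ + 1)⁻¹ * (‖z‖ + 1) :=
          mul_le_mul_of_nonneg_left h2 (by positivity)
      _ = 1 := inv_mul_cancel₀ (by positivity)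
  have hzan : ∀ n, z * a n = 0 := by
    intro n
    have e2 : a n = y * cfc (hfun n) y := by
      have e3 : cfc (gfun n) y = cfc (fun t => t * hfun n t) y :=
        cfc_congr fun t ht => gfun_factor n t (hspec t ht)
      show cfc (gfun n) y = y * cfc (hfun n) y
      rw [e3, cfc_mul (fun t : ℝ => t) (hfun n) y continuousOn_id
        ((hfun_cont n).continuousOn), cfc_id' ℝ y]
    rw [e2, ← mul_assoc, hzy, zero_mul]
  have hz'an : ∀ n, z' * a n = 0 := fun n => by
    rw [hz', smul_mul_assoc, hzan n, smul_zero]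
  have hanz' : ∀ n, a n * z' = 0 := by
    intro n
    have h := congrArg star (hz'an n)
    rwa [star_mul, hastar n, hz's, star_zero] at h
  have h1an : ∀ n, a n ≤ 1 - z' := by
    intro n
    have hfact : (1 - z') * (1 - a n) = 1 - z' - a n := by
      simp only [mul_sub, sub_mul, mul_one, one_mul]
      rw [hz'an n]
      abel
    have hpos : 0 ≤ (1 - z') * (1 - a n) := by
      refine mul_nonneg_of_comm (sub_nonneg.mpr hz'le1) (sub_nonneg.mpr (hale n)) ?_
      simp only [mul_sub, sub_mul, mul_one, one_mul]
      rw [hz'an n, hanz' n]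
      abel
    rw [hfact] at hpos
    exact sub_nonneg.mp hpos
  have hbw : b ≤ 1 - z' := by
    refine hbleast _ (hsubM 1 z' h1M hz'M) ?_ h1an
    rw [star_sub, star_one, hz's]
  have hwb : z' ≤ 1 - b := by
    have h := hbw
    rw [le_sub_iff_add_le] at h ⊢
    rwa [add_comm]
  have hzb0 : b * z' * b = 0 := by
    have h1 : b * z' * b ≤ b * (1 - b) * b := by
      have h := star_left_conjugate_le_conjugate hwb b
      rwa [hbs] at h
    have h2 : b * (1 - b) * b = 0 := by
      rw [mul_sub, mul_one, hbb, sub_self, zero_mul]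
    have h3 : 0 ≤ b * z' * b := by
      have h := star_left_conjugate_nonneg hz'0 b
      rwa [hbs] at h
    exact le_antisymm (h2 ▸ h1) h3
  have hzbb : b * z * b = 0 := by
    have h : b * z' * b = (κ : ℂ) • (b * z * b) := by
      rw [hz', mul_smul_comm, smul_mul_assoc]
    rw [h] at hzb0
    have hκne : (κ : ℂ) ≠ 0 := Complex.ofReal_ne_zero.mpr hκ0.ne'
    exact (smul_eq_zero.mp hzb0).resolve_left hκne
  have hxb : x * b = 0 := by
    have h : star (x * b) * (x * b) = 0 := by
      rw [star_mul, hbs, mul_assoc, ← mul_assoc (star x) x b, ← hz, ← mul_assoc]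
      exact hzbb
    exact (CStarRing.star_mul_self_eq_zero_iff _).mp h
  -- projections below `y` are below `b`
  have hproj : ∀ w : A, star w = w → w * w = w → 0 ≤ w → w ≤ y → w ≤ b := by
    intro w hws hwp hw0 hwy
    have h1bs : star ((1 : A) - b) = 1 - b := by rw [star_sub, star_one, hbs]
    have hybz : y * (1 - b) = 0 := by rw [mul_sub, mul_one, hyb, sub_self]
    have hbyz : (1 - b) * y = 0 := by rw [sub_mul, one_mul, hby, sub_self]
    have h1 : (1 - b) * y * (1 - b) = 0 := by rw [hbyz, zero_mul]
    have h2 : (1 - b) * w * (1 - b) = 0 := by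
      have h3 := star_left_conjugate_le_conjugate hwy (1 - b)
      rw [h1bs] at h3
      have h4 : 0 ≤ (1 - b) * w * (1 - b) := by
        have h := star_left_conjugate_nonneg hw0 (1 - b)
        rwa [h1bs] at h
      exact le_antisymm (h1 ▸ h3) h4
    have h5 : w * (1 - b) = 0 := by
      have h6 : star (w * (1 - b)) * (w * (1 - b)) = (1 - b) * w * (1 - b) := by
        rw [star_mul, h1bs, hws, mul_assoc, ← mul_assoc w w, hwp, ← mul_assoc]
      refine (CStarRing.star_mul_self_eq_zero_iff _).mp ?_
      rw [h6, h2]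
    have hwb' : w * b = w := by
      rw [mul_sub, mul_one, sub_eq_zero] at h5
      exact h5.symm
    have hbw' : b * w = w := by
      have h := congrArg star hwb'
      rwa [star_mul, hbs, hws] at h
    have h7 : star (b - w) * (b - w) = b - w := by
      rw [star_sub, hbs, hws, sub_mul, mul_sub, mul_sub, hbb, hbw', hwb', hwp]
      abel
    have h8 : (0 : A) ≤ b - w := h7 ▸ star_mul_self_nonneg (b - w)
    exact sub_nonneg.mp h8
  have hple : p ≤ b := hproj p hps hpp hp0 (by rw [hy]; exact le_add_of_nonneg_right hq0)
  have hqle : q ≤ b := hproj q hqs hqp hq0 (by rw [hy]; exact le_add_of_nonneg_left hp0)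
  exact ⟨b, ⟨hbs, hbb, hxb⟩, hple, hqle⟩
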